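/- If X is an Irr-continuous or SI⁻-continuous T₀-space, then the Irr-convergence class 𝓘 satisfies Kelley's (Divergence) axiom: if a net (x_i) does not Irr-converge to x, then it has a subnet no subnet of which Irr-converges to x. -/

import Mathlib

universe u v w

open Set

/-- A preordered index type is a (nonempty) directed index set for nets. -/
def IsDirIdx (I : Type v) [Preorder I] : Prop :=
  Nonempty I ∧ ∀ i j : I, ∃ k, i ≤ k ∧ j ≤ k

/-- Convergence of a net with respect to a topology `t` on `X`. -/
def NetConv {X : Type u} (t : TopologicalSpace X) {I : Type v} [Preorder I]
    (net : I → X) (x : X) : Prop :=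
  ∀ U : Set X, t.IsOpen U → x ∈ U → ∃ k, ∀ i, k ≤ i → net i ∈ U

section
variable {X : Type u} [TopologicalSpace X]

/-- The specialisation order: `x ≤ y` iff `x ∈ cl {y}`. -/
def sLE (x y : X) : Prop := x ∈ closure ({y} : Set X)

/-- `b` is an upper bound of `A` in the specialisation order. -/
def IsUB (A : Set X) (b : X) : Prop := ∀ a ∈ A, sLE a b

/-- `s` is the supremum (least upper bound) of `A` in the specialisation order. -/
def IsSupSpec (A : Set X) (s : X) : Prop := IsUB A s ∧ ∀ b, IsUB A b → sLE s b

/-- The upper set `↑x` in the specialisation order. -/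
def upS (x : X) : Set X := {u | sLE x u}

/-- The lower set `↓A` in the specialisation order. -/
def downS (A : Set X) : Set X := {u | ∃ a ∈ A, sLE u a}

/-- The Irr-way-below relation: `x ≪_Irr y` iff every irreducible set `E`
whose supremum exists and dominates `y` meets `↑x`. -/
def wbIrr (x y : X) : Prop :=
  ∀ E : Set X, IsIrreducible E → ∀ s : X, IsSupSpec E s → sLE y s → (E ∩ upS x).Nonempty

/-- `↡x = {u | u ≪_Irr x}`. -/
def ddIrr (x : X) : Set X := {u | wbIrr u x}

/-- `↟x = {u | x ≪_Irr u}`. -/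
def uuIrr (x : X) : Set X := {u | wbIrr x u}

/-- A directed subset (w.r.t. the specialisation order): nonempty and every
pair of elements has an upper bound in the set. -/
def DirectedSub (D : Set X) : Prop :=
  D.Nonempty ∧ ∀ a ∈ D, ∀ b ∈ D, ∃ c ∈ D, sLE a c ∧ sLE b c

/-- `e` is an eventual lower bound of the net `net`. -/
def EvLB {I : Type v} [Preorder I] (net : I → X) (e : X) : Prop :=
  ∃ k, ∀ i, k ≤ i → sLE e (net i)

/-- Irr-convergence: the net `net` Irr-converges to `y` iff there is an
irreducible set `E` with a supremum `≥ y` consisting of eventual lower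
bounds of the net. -/
def IrrConv {I : Type v} [Preorder I] (net : I → X) (y : X) : Prop :=
  ∃ E : Set X, IsIrreducible E ∧ (∃ s, IsSupSpec E s ∧ sLE y s) ∧ ∀ e ∈ E, EvLB net e

end

/-- Sup-sobriety: every closed irreducible set having a supremum is the
closure of the singleton of its supremum. -/
def SupSober (X : Type u) [TopologicalSpace X] : Prop :=
  ∀ F : Set X, IsClosed F → IsIrreducible F → ∀ s : X, IsSupSpec F s → F = closure {s}

/-- `U` is open in the irreducibly-derived topology `τ_SI`. -/
def SIOpen {X : Type u} [TopologicalSpace X] (U : Set X) : Prop :=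
  IsOpen U ∧ ∀ E : Set X, IsIrreducible E → ∀ s : X, IsSupSpec E s → s ∈ U →
    (E ∩ U).Nonempty

/-- Interior with respect to the irreducibly-derived topology. -/
def SIint {X : Type u} [TopologicalSpace X] (A : Set X) : Set X :=
  ⋃₀ {U : Set X | SIOpen U ∧ U ⊆ A}

/-- Irr-continuity: every `↡x` is irreducible with supremum `x`. -/
def IrrCont (X : Type u) [TopologicalSpace X] : Prop :=
  ∀ x : X, IsIrreducible (ddIrr x) ∧ IsSupSpec (ddIrr x) x

/-- SI⁻-continuity: every `↡x` contains a directed subset with supremum `x`. -/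
def SImCont (X : Type u) [TopologicalSpace X] : Prop :=
  ∀ x : X, ∃ D : Set X, D ⊆ ddIrr x ∧ DirectedSub D ∧ IsSupSpec D x

/-- The `*`-property: for every irreducible `F` with a supremum there is a
directed subset of `↓F` with the same supremum. -/
def StarProp (X : Type u) [TopologicalSpace X] : Prop :=
  ∀ F : Set X, IsIrreducible F → ∀ s : X, IsSupSpec F s →
    ∃ D : Set X, D ⊆ downS F ∧ DirectedSub D ∧ IsSupSpec D s

/-- The `⊕`-property: every `↟x` is open. -/
def OplusProp (X : Type u) [TopologicalSpace X] : Prop :=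
  ∀ x : X, IsOpen (uuIrr x)

/-- C-space: for every open `U` and `x ∈ U` there is `y ∈ U` with
`x ∈ int (↑y)`. -/
def CSpace (X : Type u) [TopologicalSpace X] : Prop :=
  ∀ U : Set X, IsOpen U → ∀ x ∈ U, ∃ y ∈ U, x ∈ interior (upS y)

/-- The Irr-convergence class is topological: some topology induces it. -/
def IrrTopological (X : Type u) [TopologicalSpace X] : Prop :=
  ∃ t : TopologicalSpace X, ∀ (I : Type u) [Preorder I], IsDirIdx I →
    ∀ (net : I → X) (y : X), IrrConv net y ↔ NetConv t net y

/-- The family `τ_𝓘` of sets induced by the Irr-convergence class. -/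
def tauI (X : Type u) [TopologicalSpace X] : Set (Set X) :=
  {U | ∀ (I : Type u) [Preorder I], IsDirIdx I → ∀ (net : I → X) (y : X),
      IrrConv net y → y ∈ U → ∃ k, ∀ i, k ≤ i → net i ∈ U}

/-- Kelley's (Iterated limits) axiom for the Irr-convergence class. -/
def IterLimAxiom (X : Type u) [TopologicalSpace X] : Prop :=
  ∀ (I : Type u) [Preorder I], IsDirIdx I →
    ∀ (J : I → Type u) [∀ i, Preorder (J i)], (∀ i, IsDirIdx (J i)) →
      ∀ (xi : I → X) (xx : ∀ i, J i → X) (x : X),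
        IrrConv xi x → (∀ i, IrrConv (xx i) (xi i)) →
        IrrConv (fun p : I × (∀ i, J i) => xx p.1 (p.2 p.1)) x

lemma sLE_refl {X : Type u} [TopologicalSpace X] (x : X) : sLE x x :=
  subset_closure rfl

lemma sLE_trans {X : Type u} [TopologicalSpace X] {a b c : X}
    (h1 : sLE a b) (h2 : sLE b c) : sLE a c := by
  have : closure ({b} : Set X) ⊆ closure {c} :=
    closure_minimal (by simpa [Set.singleton_subset_iff, sLE] using h2) isClosed_closure
  exact this h1

lemma open_up {X : Type u} [TopologicalSpace X] {u : Set X} (hu : IsOpen u)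
    {a c : X} (ha : a ∈ u) (hac : sLE a c) : c ∈ u := by
  rcases (mem_closure_iff.mp hac) u hu ha with ⟨z, hz, rfl⟩
  exact hz

/-- the (Divergence) axiom in Irr-continuous or SI⁻-continuous
spaces. -/
theorem irrConv_divergence {X : Type u} [TopologicalSpace X] [T0Space X]
    (hX : IrrCont X ∨ SImCont X)
    {I : Type v} [Preorder I] (hI : IsDirIdx I) (net : I → X) (x : X)
    (hnc : ¬ IrrConv net x) :
    ∃ (J : Type v) (pJ : Preorder J) (g : J → I),
      @IsDirIdx J pJ ∧
      (∀ i : I, ∃ j0 : J, ∀ j : J, pJ.le j0 j → i ≤ g j) ∧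
      (∀ (K : Type w) (pK : Preorder K), @IsDirIdx K pK →
        ∀ h : K → J, (∀ j : J, ∃ k0 : K, ∀ k : K, pK.le k0 k → pJ.le j (h k)) →
          ¬ @IrrConv X _ K pK (fun k => net (g (h k))) x) := by
  classical
  -- extract a set B ⊆ ↡x, irreducible, with sup x
  obtain ⟨B, hBirr, hBsub, hBsup⟩ :
      ∃ B : Set X, IsIrreducible B ∧ B ⊆ ddIrr x ∧ IsSupSpec B x := by
    rcases hX with h | h
    · exact ⟨ddIrr x, (h x).1, subset_rfl, (h x).2⟩
    · obtain ⟨D, hD1, ⟨hDne, hDdir⟩, hD3⟩ := h x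
      refine ⟨D, ⟨hDne, ?_⟩, hD1, hD3⟩
      intro u v hu hv ⟨a, haD, hau⟩ ⟨b, hbD, hbv⟩
      obtain ⟨c, hcD, hac, hbc⟩ := hDdir a haD b hbD
      exact ⟨c, hcD, open_up hu hau hac, open_up hv hbv hbc⟩
  -- some e₀ ∈ B is not an eventual lower bound
  have he0 : ∃ e0 ∈ B, ¬ EvLB net e0 := by
    by_contra hcon
    push_neg at hcon
    exact hnc ⟨B, hBirr, ⟨x, hBsup, sLE_refl x⟩, hcon⟩
  obtain ⟨e0, he0B, he0n⟩ := he0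
  have hfreq : ∀ k : I, ∃ i, k ≤ i ∧ ¬ sLE e0 (net i) := by
    intro k
    by_contra hc
    push_neg at hc
    exact he0n ⟨k, fun i hi => hc i hi⟩
  refine ⟨{i : I // ¬ sLE e0 (net i)}, inferInstance, Subtype.val, ?_, ?_, ?_⟩
  · constructor
    · obtain ⟨i0⟩ := hI.1
      obtain ⟨i, _, hi⟩ := hfreq i0
      exact ⟨⟨i, hi⟩⟩
    · rintro ⟨a, ha⟩ ⟨b, hb⟩
      obtain ⟨k, hak, hbk⟩ := hI.2 a b
      obtain ⟨i, hki, hi⟩ := hfreq k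
      exact ⟨⟨i, hi⟩, Subtype.mk_le_mk.mpr (le_trans hak hki), Subtype.mk_le_mk.mpr (le_trans hbk hki)⟩
  · intro i
    obtain ⟨i', hii', hi'⟩ := hfreq i
    exact ⟨⟨i', hi'⟩, fun j hj => le_trans hii' (Subtype.coe_le_coe.mpr hj)⟩
  · intro K pK hK h hcof hconv
    obtain ⟨E, hEirr, ⟨s, hEsup, hxs⟩, hEev⟩ := hconv
    obtain ⟨e, heE, hee⟩ := hBsub he0B E hEirr s hEsup hxs
    obtain ⟨k0, hk0⟩ := hEev e heE
    exact (h k0).2 (sLE_trans hee (hk0 k0 (le_refl k0)))
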